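/- Let γ be a scalar system of SL_n-type. For all distinct i, j ∈ {1,…,n}, every subset S ⊆ {1,…,n} with i ∉ S and j ∉ S, and every λ ∈ ℤ^n, one has γ({i},{j};λ) = γ({i},{j};λ − e_S). -/

import Mathlib

open Finset

/-- The indicator vector `e_S ∈ ℤ^n` of a subset `S ⊆ {1,…,n}`. -/
def eVec (n : ℕ) (S : Finset (Fin n)) : Fin n → ℤ := fun i => if i ∈ S then 1 else 0

/-- A scalar system of `T\SL_n`-type: a family of scalars `γ(S,T;λ) ∈ k`
indexed by pairs of disjoint subsets `S, T ⊆ {1,…,n}` and `λ ∈ ℤ^n`,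
invariant under `λ ↦ λ + (1,…,1)` and normalized on empty sets,
satisfying the relations (i)–(vi) of Definition 5.4 of the paper. -/
structure ScalarSystem (n : ℕ) (k : Type*) [Field k] (q : k) where
  γ : Finset (Fin n) → Finset (Fin n) → (Fin n → ℤ) → k
  periodic : ∀ (S T : Finset (Fin n)) (lam : Fin n → ℤ),
    γ S T (lam + eVec n Finset.univ) = γ S T lam
  empty_left : ∀ (T : Finset (Fin n)) (lam : Fin n → ℤ), γ ∅ T lam = 1
  empty_right : ∀ (S : Finset (Fin n)) (lam : Fin n → ℤ), γ S ∅ lam = 1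
  rel1 : ∀ (S T : Finset (Fin n)) (lam : Fin n → ℤ), Disjoint S T →
    γ S T lam * γ T S (lam - eVec n S) = 1
  rel2 : ∀ (S : Finset (Fin n)) (i j : Fin n) (lam : Fin n → ℤ),
    i ≠ j → i ∉ S → j ∉ S →
    γ (insert i S) {j} lam * γ {j} S (lam - eVec n S)
      + γ (insert j S) {i} lam * γ {i} S (lam - eVec n S) = q + q⁻¹
  rel3 : ∀ (S : Finset (Fin n)) (i j : Fin n) (lam : Fin n → ℤ),
    i ≠ j → i ∉ S → j ∉ S →
    γ S {i} lam * γ {i} (insert j S) (lam - eVec n (insert j S))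
      = γ (insert i S) {j} (lam - eVec n {j}) * γ {j} S (lam - eVec n (insert j S))
  rel4 : ∀ (S T U : Finset (Fin n)) (lam : Fin n → ℤ),
    Disjoint S T → Disjoint S U → Disjoint T U →
    γ S T (lam + eVec n U) * γ (S ∪ T) U lam = γ S (T ∪ U) lam * γ T U lam
  rel5 : ∀ (i j : Fin n) (lam : Fin n → ℤ), i ≠ j →
    γ {i} {j} lam + γ {j} {i} lam = q + q⁻¹
  rel6 : ∀ (i j l : Fin n) (lam : Fin n → ℤ), i ≠ j → j ≠ l → i ≠ l →
    γ {i} {j, l} lam + γ {j} {l, i} lam + γ {l} {i, j} lam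
      = q * q + 1 + q⁻¹ * q⁻¹

theorem shift_core {K : Type*} [Field K]
    (β g1 g1' g2 g2' g3 g3' A1 A2 A3 B1 B2 B3 x1 y1 u v k1 k2 i1 i2 j1 j2 : K)
    (h51 : g1 + g1' = β) (h52 : g2 + g2' = β) (h53 : g3 + g3' = β)
    (eq1 : k1 * B1 = A1 * g2)
    (eq2 : k2 * B1 = A2 * g3')
    (h5k : k1 + k2 = β)
    (eq3 : i1 * B2 = A2 * g3)
    (eq4 : i2 * B2 = A3 * g1')
    (h5i : i1 + i2 = β)
    (eq5 : j1 * B3 = A3 * g1)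
    (eq6 : j2 * B3 = A1 * g2')
    (h5j : j1 + j2 = β)
    (h6 : A1 + A2 + A3 = β * β - 1)
    (R2i : B1 * x1 + B3 * y1 = β)
    (hx1 : g3' * x1 = 1)
    (hy1 : g1 * y1 = 1)
    (R2j : B2 * u + B1 * v = β)
    (hu : g1' * u = 1)
    (hv : g2 * v = 1)
    (hβ : β ≠ 0) (hg1 : g1 ≠ 0) (hg3' : g3' ≠ 0) (hB1ne : B1 ≠ 0) :
    k1 = g1 := by
  have e1 : g1' = β - g1 := by linear_combination h51
  have e2 : g2' = β - g2 := by linear_combination h52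
  have e3 : g3' = β - g3 := by linear_combination h53
  subst e1 e2 e3
  have hB1eq : β * B1 = A1 * g2 + A2 * (β - g3) := by
    linear_combination eq1 + eq2 - B1 * h5k
  have hB2eq : β * B2 = A2 * g3 + A3 * (β - g1) := by
    linear_combination eq3 + eq4 - B2 * h5i
  have hB3eq : β * B3 = A3 * g1 + A1 * (β - g2) := by
    linear_combination eq5 + eq6 - B3 * h5j
  have step1 : β * B1 * g1 + β * B3 * (β - g3) = β * β * g1 * (β - g3) := by
    linear_combination (β * g1 * (β - g3)) * R2i - (β * B1 * g1) * hx1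
      - (β * B3 * (β - g3)) * hy1
  have hC1 : A1 * (g1 * g2 + (β - g2) * (β - g3) - g1 * (β - g3)) = g1 * (β - g3) := by
    linear_combination step1 - g1 * hB1eq - (β - g3) * hB3eq - (g1 * (β - g3)) * h6
  have step1' : β * B2 * g2 + β * B1 * (β - g1) = β * β * (β - g1) * g2 := by
    linear_combination (β * (β - g1) * g2) * R2j - (β * B2 * g2) * hu
      - (β * B1 * (β - g1)) * hv
  have hC2 : A2 * (g1 * g2 + (β - g2) * (β - g3) - g1 * (β - g3)) = g2 * (β - g1) := by
    linear_combination step1' - g2 * hB2eq - (β - g1) * hB1eq - (g2 * (β - g1)) * h6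
  have hTne : (g1 * g2 + (β - g2) * (β - g3) - g1 * (β - g3)) ≠ 0 := by
    intro h
    rw [h, mul_zero] at hC1
    exact (mul_ne_zero hg1 hg3') hC1.symm
  have key : A1 * g2 * (β - g1) = A2 * g1 * (β - g3) := by
    apply mul_right_cancel₀ hTne
    linear_combination (g2 * (β - g1)) * hC1 - (g1 * (β - g3)) * hC2
  have hfin : A1 * g2 = g1 * B1 := by
    apply mul_right_cancel₀ hβ
    linear_combination key - g1 * hB1eq
  exact mul_right_cancel₀ hB1ne (eq1.trans hfin)

theorem shift_add_one {n : ℕ} {k : Type*} [Field k] {q : k}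
    (hq : q ≠ 0) (hβ : q + q⁻¹ ≠ 0) (Γ : ScalarSystem n k q)
    (i j l : Fin n) (hij : i ≠ j) (hjl : j ≠ l) (hil : i ≠ l) (lam : Fin n → ℤ) :
    Γ.γ {i} {j} (lam + eVec n {l}) = Γ.γ {i} {j} lam := by
  have hd : ∀ {a b : Fin n}, a ≠ b → Disjoint ({a} : Finset (Fin n)) {b} := by
    intro a b h; simp [h.symm, h]
  have d2 : ∀ {a b c : Fin n}, a ≠ c → b ≠ c →
      Disjoint ({a, b} : Finset (Fin n)) {c} := by
    intro a b c h1 h2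
    simp only [Finset.disjoint_insert_left, Finset.disjoint_singleton_left,
      Finset.mem_singleton]
    exact ⟨h1, h2⟩
  -- rel5 facts
  have h51 := Γ.rel5 i j lam hij
  have h52 := Γ.rel5 j l lam hjl
  have h53 := Γ.rel5 l i lam hil.symm
  have h5k := Γ.rel5 i j (lam + eVec n {l}) hij
  have h5i := Γ.rel5 j l (lam + eVec n {i}) hjl
  have h5j := Γ.rel5 l i (lam + eVec n {j}) hil.symm
  -- rel4 facts
  have eq1 := Γ.rel4 {i} {j} {l} lam (hd hij) (hd hil) (hd hjl)
  have eq2 := Γ.rel4 {j} {i} {l} lam (hd hij.symm) (hd hjl) (hd hil)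
  have eq3 := Γ.rel4 {j} {l} {i} lam (hd hjl) (hd hij.symm) (hd hil.symm)
  have eq4 := Γ.rel4 {l} {j} {i} lam (hd hjl.symm) (hd hil.symm) (hd hij.symm)
  have eq5 := Γ.rel4 {l} {i} {j} lam (hd hil.symm) (hd hjl.symm) (hd hij)
  have eq6 := Γ.rel4 {i} {l} {j} lam (hd hil) (hd hij) (hd hjl.symm)
  simp only [← Finset.insert_eq] at eq1 eq2 eq3 eq4 eq5 eq6
  rw [Finset.pair_comm j i] at eq2
  rw [Finset.pair_comm l i] at eq3
  rw [Finset.pair_comm l j, Finset.pair_comm j i] at eq4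
  rw [Finset.pair_comm l i] at eq5
  rw [Finset.pair_comm l j] at eq6
  -- rel6
  have h6raw := Γ.rel6 i j l lam hij hjl hil
  rw [Finset.pair_comm l i] at h6raw
  have h6 : Γ.γ {i} {j, l} lam + Γ.γ {j} {i, l} lam + Γ.γ {l} {i, j} lam
      = (q + q⁻¹) * (q + q⁻¹) - 1 := by
    linear_combination h6raw - 2 * (mul_inv_cancel₀ hq)
  -- rel2 facts
  have R2i := Γ.rel2 {i} j l lam hjl (by simpa using hij.symm) (by simpa using hil.symm)
  rw [show insert j ({i} : Finset (Fin n)) = {i, j} from Finset.pair_comm j i,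
    show insert l ({i} : Finset (Fin n)) = {i, l} from Finset.pair_comm l i] at R2i
  have R2j := Γ.rel2 {j} l i lam hil.symm (by simpa using hjl.symm) (by simpa using hij)
  rw [show insert l ({j} : Finset (Fin n)) = {j, l} from Finset.pair_comm l j] at R2j
  -- rel1 facts
  have hx1 := Γ.rel1 {i} {l} lam (hd hil)
  have hy1 := Γ.rel1 {i} {j} lam (hd hij)
  have hu := Γ.rel1 {j} {i} lam (hd hij.symm)
  have hv := Γ.rel1 {j} {l} lam (hd hjl)
  have hB1ne : Γ.γ {i, j} {l} lam ≠ 0 :=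
    left_ne_zero_of_mul_eq_one (Γ.rel1 {i, j} {l} lam (d2 hil hjl))
  have hg1 : Γ.γ {i} {j} lam ≠ 0 := left_ne_zero_of_mul_eq_one hy1
  have hg3' : Γ.γ {i} {l} lam ≠ 0 := left_ne_zero_of_mul_eq_one hx1
  exact shift_core (q + q⁻¹)
    (Γ.γ {i} {j} lam) (Γ.γ {j} {i} lam)
    (Γ.γ {j} {l} lam) (Γ.γ {l} {j} lam)
    (Γ.γ {l} {i} lam) (Γ.γ {i} {l} lam)
    (Γ.γ {i} {j, l} lam) (Γ.γ {j} {i, l} lam) (Γ.γ {l} {i, j} lam)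
    (Γ.γ {i, j} {l} lam) (Γ.γ {j, l} {i} lam) (Γ.γ {i, l} {j} lam)
    (Γ.γ {l} {i} (lam - eVec n {i})) (Γ.γ {j} {i} (lam - eVec n {i}))
    (Γ.γ {i} {j} (lam - eVec n {j})) (Γ.γ {l} {j} (lam - eVec n {j}))
    (Γ.γ {i} {j} (lam + eVec n {l})) (Γ.γ {j} {i} (lam + eVec n {l}))
    (Γ.γ {j} {l} (lam + eVec n {i})) (Γ.γ {l} {j} (lam + eVec n {i}))
    (Γ.γ {l} {i} (lam + eVec n {j})) (Γ.γ {i} {l} (lam + eVec n {j}))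
    h51 h52 h53 eq1 eq2 h5k eq3 eq4 h5i eq5 eq6 h5j h6
    R2i hx1 hy1 R2j hu hv hβ hg1 hg3' hB1ne

lemma eVec_empty (n : ℕ) : eVec n (∅ : Finset (Fin n)) = 0 := by
  funext x; simp [eVec]

lemma eVec_insert {n : ℕ} (a : Fin n) (s : Finset (Fin n)) (ha : a ∉ s) :
    eVec n (insert a s) = eVec n s + eVec n {a} := by
  funext x
  simp only [eVec, Pi.add_apply, Finset.mem_insert, Finset.mem_singleton]
  rcases eq_or_ne x a with rfl | h
  · simp [ha]
  · simp [h]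

theorem shift_sub_one {n : ℕ} {k : Type*} [Field k] {q : k}
    (hq : q ≠ 0) (hβ : q + q⁻¹ ≠ 0) (Γ : ScalarSystem n k q)
    (i j l : Fin n) (hij : i ≠ j) (hjl : j ≠ l) (hil : i ≠ l) (lam : Fin n → ℤ) :
    Γ.γ {i} {j} (lam - eVec n {l}) = Γ.γ {i} {j} lam := by
  have h := shift_add_one hq hβ Γ i j l hij hjl hil (lam - eVec n {l})
  rw [show lam - eVec n {l} + eVec n {l} = lam from by abel] at h
  exact h.symm

/-- Proposition 5.8 (ii): `γ({i},{j};λ) = γ({i},{j};λ − e_S)` when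
`i, j ∉ S` are distinct, for a scalar system of `SL_n`-type. -/
theorem scalarSystem_single_shift_invariant {n : ℕ} (hn : 1 ≤ n)
    {k : Type*} [Field k] [CharZero k]
    (q : k) (hq : q ≠ 0) (hroot : ∀ m : ℤ, m ≠ 0 → q ^ m ≠ 1)
    (Γ : ScalarSystem n k q) :
    ∀ (i j : Fin n) (S : Finset (Fin n)) (lam : Fin n → ℤ),
      i ≠ j → i ∉ S → j ∉ S →
      Γ.γ {i} {j} lam = Γ.γ {i} {j} (lam - eVec n S) := by
  have hβ : q + q⁻¹ ≠ 0 := by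
    intro h
    have h4 : q ^ (4 : ℕ) ≠ 1 := by
      have := hroot 4 (by norm_num)
      rwa [show (4 : ℤ) = ((4 : ℕ) : ℤ) by norm_num, zpow_natCast] at this
    apply h4
    have h2 : q ^ 2 = -1 := by
      linear_combination q * h - mul_inv_cancel₀ hq
    rw [show (4 : ℕ) = 2 * 2 from rfl, pow_mul, h2]
    norm_num
  intro i j S
  induction S using Finset.induction_on with
  | empty => intro lam _ _ _; rw [eVec_empty, sub_zero]
  | @insert a s ha ih =>
    intro lam hij hiS hjS
    have hia : i ≠ a := fun h => hiS (by simp [h])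
    have hja : j ≠ a := fun h => hjS (by simp [h])
    have his : i ∉ s := fun h => hiS (Finset.mem_insert_of_mem h)
    have hjs : j ∉ s := fun h => hjS (Finset.mem_insert_of_mem h)
    have hsplit : lam - eVec n (insert a s) = lam - eVec n {a} - eVec n s := by
      rw [eVec_insert a s ha]; abel
    rw [hsplit]
    calc Γ.γ {i} {j} lam = Γ.γ {i} {j} (lam - eVec n {a}) :=
          (shift_sub_one hq hβ Γ i j a hij hja hia lam).symm
      _ = Γ.γ {i} {j} (lam - eVec n {a} - eVec n s) :=
          ih (lam - eVec n {a}) hij his hjs
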